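/- In the class of connected graphs of bounded degree, the property of having polynomial containment of degree at most d is a quasi-isometry invariant: if G and G' are connected graphs of bounded degree (equipped with their combinatorial metrics) that are quasi-isometric, and G has polynomial containment of degree at most d, then G' has polynomial containment of degree at most d. -/

import Mathlib

universe u

/-- A map between the vertex sets of two graphs (each vertex set carrying the combinatorial
metric `SimpleGraph.dist`) is a quasi-isometry. -/
def GraphQuasiIsometry {V : Type*} {V' : Type*} (G : SimpleGraph V) (G' : SimpleGraph V')
    (f : V → V') : Prop :=
  ∃ lam ε K : ℝ, 1 ≤ lam ∧ 0 ≤ ε ∧ 0 ≤ K ∧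
    (∀ x y : V,
      lam⁻¹ * (G.dist x y : ℝ) - ε ≤ (G'.dist (f x) (f y) : ℝ) ∧
      (G'.dist (f x) (f y) : ℝ) ≤ lam * (G.dist x y : ℝ) + ε) ∧
    (∀ v' : V', ∃ x : V, (G'.dist v' (f x) : ℝ) ≤ K)

/-- Two graphs are quasi-isometric (with their combinatorial metrics). -/
def QuasiIsometric {V V' : Type*} (G : SimpleGraph V) (G' : SimpleGraph V') : Prop :=
  ∃ f : V → V', GraphQuasiIsometry G G' f

/-- `G` has polynomial containment of degree at most `d`. -/
def HasPolyContainment {V : Type*} (G : SimpleGraph V) (d : ℕ) : Prop :=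
  ∃ C : ℝ, 0 < C ∧
    ∀ X₀ : Set V, X₀.Finite →
      ∃ (W : ℕ → Set V) (X : ℕ → Set V),
        X 0 = X₀ ∧
        (∀ n : ℕ, 1 ≤ n → (W n).Finite ∧ ((W n).ncard : ℝ) ≤ C * (n : ℝ) ^ d) ∧
        (∀ n : ℕ, X (n + 1) =
          {v : V | ∃ u ∈ X n, v = u ∨ G.Adj u v} \ (⋃ k ∈ Finset.Icc 1 (n + 1), W k)) ∧
        (∀ n : ℕ, Disjoint (X n) (W (n + 1))) ∧
        (∃ T : ℕ, 0 < T ∧ ∀ n : ℕ, T ≤ n → X n = X T)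

/-- `G` has all vertex degrees bounded above by some `D`. -/
def BoundedDegree {V : Type*} (G : SimpleGraph V) : Prop :=
  ∃ D : ℕ, ∀ v : V, (G.neighborSet v).Finite ∧ (G.neighborSet v).ncard ≤ D

/-- Number of vertices at distance at most `n` from the base vertex `g₀`. -/
noncomputable def growthFunction {V : Type*} (G : SimpleGraph V) (g₀ : V) (n : ℕ) : ℕ :=
  {v : V | G.dist g₀ v ≤ n}.ncard

/-- Edges of `G` with exactly one endpoint in `K`. -/
def edgeBoundary {V : Type*} (G : SimpleGraph V) (K : Set V) : Set (Sym2 V) :=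
  {e ∈ G.edgeSet | ∃ u v : V, e = s(u, v) ∧ u ∈ K ∧ v ∉ K}

/-- Cheeger constant of a graph. -/
noncomputable def cheegerConstant {V : Type*} (G : SimpleGraph V) : ℝ :=
  sInf {r : ℝ | ∃ K : Set V, K.Finite ∧ K.Nonempty ∧
    r = ((edgeBoundary G K).ncard : ℝ) / (K.ncard : ℝ)}

/-- Cayley graph of a group with respect to a set `S`. -/
def cayleyGraph (Γ : Type*) [Group Γ] (S : Set Γ) : SimpleGraph Γ :=
  SimpleGraph.fromRel (fun g h => ∃ s ∈ S, h = g * s)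

/-- Word length of `g` with respect to `S`. -/
noncomputable def wordLength {Γ : Type*} [Group Γ] (S : Set Γ) (g : Γ) : ℕ :=
  sInf {n : ℕ | ∃ l : List Γ, l.length = n ∧ (∀ x ∈ l, x ∈ S ∪ S⁻¹) ∧ l.prod = g}

def VirtuallyNilpotent (Γ : Type*) [Group Γ] : Prop :=
  ∃ H : Subgroup Γ, H.FiniteIndex ∧ Group.IsNilpotent H

/-- The infinite `δ`-regular tree. -/
def IsRegularTree {U : Type*} (T : SimpleGraph U) (δ : ℕ) : Prop :=
  Infinite U ∧ T.IsTree ∧ ∀ v : U, (T.neighborSet v).Finite ∧ (T.neighborSet v).ncard = δ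

/-- `a` and `b` generate a free semigroup of rank two. -/
def GeneratesFreeSemigroup {Γ : Type*} [Group Γ] (a b : Γ) : Prop :=
  Function.Injective
    (FreeSemigroup.lift (fun x : Bool => if x then a else b) : FreeSemigroup Bool →ₙ* Γ)

/-- Elementary amenable groups: the smallest class containing finite and abelian groups and
closed under subgroups, quotients, extensions and directed unions. -/
inductive ElementaryAmenable : (G : Type u) → [inst : Group G] → Prop
  | finite (G : Type u) [Group G] [Finite G] : ElementaryAmenable G
  | abelian (G : Type u) [Group G] (h : ∀ a b : G, a * b = b * a) : ElementaryAmenable G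
  | subgroup {G H : Type u} [Group G] [Group H] (f : H →* G) (hf : Function.Injective f)
      (hG : ElementaryAmenable G) : ElementaryAmenable H
  | quotient {G H : Type u} [Group G] [Group H] (f : G →* H) (hf : Function.Surjective f)
      (hG : ElementaryAmenable G) : ElementaryAmenable H
  | extension {G : Type u} [Group G] (N : Subgroup G) [N.Normal]
      (hN : ElementaryAmenable N) (hQ : ElementaryAmenable (G ⧸ N)) : ElementaryAmenable G
  | directedUnion {G : Type u} [Group G] {ι : Type u} (H : ι → Subgroup G)
      (hdir : ∀ i j, ∃ k, H i ≤ H k ∧ H j ≤ H k)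
      (hunion : ∀ g : G, ∃ i, g ∈ H i)
      (hEA : ∀ i, ElementaryAmenable (H i)) : ElementaryAmenable G

namespace PCaux

lemma dist_getVert_le {V : Type*} {G : SimpleGraph V} (hc : G.Connected)
    {a b : V} (w : G.Walk a b) (t : ℕ) : G.dist a (w.getVert t) ≤ t := by
  induction t with
  | zero => simp
  | succ t ih =>
    by_cases ht : t < w.length
    · have hadj := w.adj_getVert_succ ht
      have h1 : G.dist (w.getVert t) (w.getVert (t+1)) ≤ 1 :=
        (SimpleGraph.dist_eq_one_iff_adj.mpr hadj).le
      have := hc.dist_triangle (u := a) (v := w.getVert t) (w := w.getVert (t+1))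
      omega
    · have h1 : w.getVert (t+1) = w.getVert t := by
        rw [w.getVert_of_length_le (by omega), w.getVert_of_length_le (by omega)]
      rw [h1]; exact ih.trans (by omega)

lemma ball_aux {V : Type*} {G : SimpleGraph V} (hc : G.Connected) {D : ℕ}
    (hD : ∀ v : V, (G.neighborSet v).Finite ∧ (G.neighborSet v).ncard ≤ D) (y : V) :
    ∀ r : ℕ, {v | G.dist y v ≤ r}.Finite ∧ {v | G.dist y v ≤ r}.ncard ≤ (D+1)^r := by
  classical
  intro r
  induction r with
  | zero =>
    have : {v | G.dist y v ≤ 0} = {y} := by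
      ext v
      simp only [Set.mem_setOf_eq, Nat.le_zero, Set.mem_singleton_iff, hc.dist_eq_zero_iff]
      exact comm
    rw [this]; simp
  | succ r ih =>
    obtain ⟨hfin, hcard⟩ := ih
    set F : Finset V := hfin.toFinset with hF
    set U : Finset V := F.biUnion (fun w => insert w (hD w).1.toFinset) with hU
    have hsub : {v | G.dist y v ≤ r + 1} ⊆ ↑U := by
      intro v hv
      simp only [Set.mem_setOf_eq] at hv
      by_cases hvr : G.dist y v ≤ r
      · have hvF : v ∈ F := by rw [hF, Set.Finite.mem_toFinset]; exact hvr
        simp only [hU, Finset.coe_biUnion, Set.mem_iUnion]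
        exact ⟨v, hvF, by simp⟩
      · have hd : G.dist y v = r + 1 := by omega
        have hne : G.dist y v ≠ 0 := by omega
        obtain ⟨p, hp⟩ := SimpleGraph.exists_walk_of_dist_ne_zero hne
        have hlen : p.length = r + 1 := by rw [hp, hd]
        have hw : G.dist y (p.getVert r) ≤ r := dist_getVert_le hc p r
        have hadj : G.Adj (p.getVert r) (p.getVert (r+1)) :=
          p.adj_getVert_succ (by omega)
        have hgv : p.getVert (r+1) = v := by
          rw [← hlen]; exact p.getVert_length
        rw [hgv] at hadj
        have hwF : p.getVert r ∈ F := by rw [hF, Set.Finite.mem_toFinset]; exact hw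
        simp only [hU, Finset.coe_biUnion, Set.mem_iUnion]
        refine ⟨p.getVert r, hwF, ?_⟩
        simp only [Finset.coe_insert, Set.mem_insert_iff, Set.Finite.coe_toFinset]
        exact Or.inr hadj
    constructor
    · exact Set.Finite.subset U.finite_toSet hsub
    · have h1 : {v | G.dist y v ≤ r + 1}.ncard ≤ U.card := by
        have := Set.ncard_le_ncard hsub U.finite_toSet
        rwa [Set.ncard_coe_finset] at this
      have h2 : U.card ≤ F.card * (D + 1) := by
        calc U.card ≤ ∑ w ∈ F, (insert w (hD w).1.toFinset).card := Finset.card_biUnion_le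
          _ ≤ ∑ _w ∈ F, (D + 1) := by
            refine Finset.sum_le_sum fun w _ => ?_
            have := Finset.card_insert_le w (hD w).1.toFinset
            have h3 : (hD w).1.toFinset.card ≤ D := by
              rw [← Set.ncard_eq_toFinset_card _ (hD w).1]; exact (hD w).2
            omega
          _ = F.card * (D + 1) := by rw [Finset.sum_const, smul_eq_mul]
      have h4 : F.card ≤ (D+1)^r := by
        rw [hF, ← Set.ncard_eq_toFinset_card _ hfin]; exact hcard
      calc {v | G.dist y v ≤ r + 1}.ncard ≤ F.card * (D+1) := h1.trans h2
        _ ≤ (D+1)^r * (D+1) := Nat.mul_le_mul_right _ h4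
        _ = (D+1)^(r+1) := (pow_succ _ _).symm

end PCaux
namespace PCaux

lemma seq_notW {V : Type*} {G : SimpleGraph V} {W X : ℕ → Set V}
    (hrec : ∀ n : ℕ, X (n + 1) =
      {v : V | ∃ u ∈ X n, v = u ∨ G.Adj u v} \ (⋃ k ∈ Finset.Icc 1 (n + 1), W k))
    (hdisj : ∀ n : ℕ, Disjoint (X n) (W (n + 1))) :
    ∀ n k, 1 ≤ k → k ≤ n + 1 → ∀ v ∈ X n, v ∉ W k := by
  intro n k hk1 hk2 v hv hvW
  rcases Nat.lt_or_ge k (n + 1) with hlt | hge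
  · obtain ⟨m, rfl⟩ : ∃ m, n = m + 1 := ⟨n - 1, by omega⟩
    rw [hrec m] at hv
    exact hv.2 (Set.mem_iUnion₂.mpr ⟨k, Finset.mem_Icc.mpr ⟨hk1, by omega⟩, hvW⟩)
  · have hkn : k = n + 1 := by omega
    subst hkn
    exact Set.disjoint_left.mp (hdisj n) hv hvW

lemma seq_mono {V : Type*} {G : SimpleGraph V} {W X : ℕ → Set V}
    (hrec : ∀ n : ℕ, X (n + 1) =
      {v : V | ∃ u ∈ X n, v = u ∨ G.Adj u v} \ (⋃ k ∈ Finset.Icc 1 (n + 1), W k))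
    (hdisj : ∀ n : ℕ, Disjoint (X n) (W (n + 1))) :
    Monotone X := by
  apply monotone_nat_of_le_succ
  intro n v hv
  rw [hrec n]
  refine ⟨⟨v, hv, Or.inl rfl⟩, fun hmem => ?_⟩
  obtain ⟨k, hk, hvW⟩ := Set.mem_iUnion₂.mp hmem
  obtain ⟨hk1, hk2⟩ := Finset.mem_Icc.mp hk
  exact seq_notW hrec hdisj n k hk1 hk2 v hv hvW

lemma seq_fin {V : Type*} {G : SimpleGraph V} {W X : ℕ → Set V} {D : ℕ}
    (hD : ∀ v : V, (G.neighborSet v).Finite ∧ (G.neighborSet v).ncard ≤ D)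
    (hrec : ∀ n : ℕ, X (n + 1) =
      {v : V | ∃ u ∈ X n, v = u ∨ G.Adj u v} \ (⋃ k ∈ Finset.Icc 1 (n + 1), W k))
    (h0 : (X 0).Finite) : ∀ n, (X n).Finite := by
  intro n
  induction n with
  | zero => exact h0
  | succ n ih =>
    have hsub : X (n + 1) ⊆ ⋃ u ∈ X n, insert u (G.neighborSet u) := by
      intro v hv
      rw [hrec n] at hv
      obtain ⟨⟨u, hu, hcase⟩, -⟩ := hv
      refine Set.mem_iUnion₂.mpr ⟨u, hu, ?_⟩
      rcases hcase with rfl | hadj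
      · exact Set.mem_insert _ _
      · exact Set.mem_insert_of_mem _ hadj
    exact Set.Finite.subset (Set.Finite.biUnion ih fun u _ => ((hD u).1.insert u)) hsub

lemma stabilize {V' : Type*} {X : ℕ → Set V'} (hmono : Monotone X)
    {A : Set V'} (hA : A.Finite) (hXA : ∀ n, X n ⊆ A) :
    ∃ T : ℕ, 0 < T ∧ ∀ n, T ≤ n → X n = X T := by
  classical
  set B := ⋃ n, X n with hB
  have hBfin : B.Finite := hA.subset (Set.iUnion_subset hXA)
  choose idx hidx using fun (a : V') (h : a ∈ B) => Set.mem_iUnion.mp h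
  set T := hBfin.toFinset.sup (fun a => if h : a ∈ B then idx a h else 0) + 1 with hT
  refine ⟨T, Nat.succ_pos _, fun n hn => ?_⟩
  apply Set.Subset.antisymm
  · intro a ha
    have haB : a ∈ B := Set.mem_iUnion.mpr ⟨n, ha⟩
    have h2 : idx a haB ≤ T := by
      have hmem : a ∈ hBfin.toFinset := hBfin.mem_toFinset.mpr haB
      have hle := Finset.le_sup (f := fun a => if h : a ∈ B then idx a h else 0) hmem
      simp only [haB, dif_pos] at hle
      omega
    exact hmono h2 (hidx a haB)
  · exact hmono hn

end PCaux

/-- polynomial containment of degree at most `d` is a quasi-isometry invariant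
among connected graphs of bounded degree. -/
theorem polyContainment_quasiIsometry_invariant {V V' : Type u}
    (G : SimpleGraph V) (G' : SimpleGraph V')
    (hG : G.Connected) (hG' : G'.Connected)
    (hbG : BoundedDegree G) (hbG' : BoundedDegree G')
    (d : ℕ) (hqi : QuasiIsometric G G')
    (h : HasPolyContainment G d) :
    HasPolyContainment G' d := by
  classical
  obtain ⟨f, lam, ε, K, hlam, hε, hK, hfb, hdense⟩ := hqi
  obtain ⟨C, hC, hPC⟩ := h
  obtain ⟨D', hD'⟩ := hbG'
  obtain ⟨D, hD⟩ := hbG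
  choose g hg using hdense
  have hlam0 : (0:ℝ) < lam := lt_of_lt_of_le one_pos hlam
  set M : ℕ := max 1 ⌈lam * (2 * K + 1 + ε)⌉₊ with hM
  have hM1 : 1 ≤ M := le_max_left _ _
  have hMpos : 0 < M := hM1
  set R : ℝ := K + (lam * (2 * M) + ε) with hR
  set Rn : ℕ := ⌈R⌉₊ with hRn
  set B : ℕ := (D' + 1) ^ Rn with hB
  have hBpos : 0 < B := Nat.pow_pos (by omega)
  set C' : ℝ := C * (M : ℝ) ^ (d + 1) * (B : ℝ) with hC'
  have hC'pos : 0 < C' := by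
    refine mul_pos (mul_pos hC (pow_pos ?_ _)) ?_
    · exact_mod_cast hMpos
    · exact_mod_cast hBpos
  refine ⟨C', hC'pos, ?_⟩
  intro X₀' hX₀'
  obtain ⟨W, X, hX0, hWsz, hXrec, hXdisj, T, hTpos, hstab⟩ := hPC (g '' X₀') (hX₀'.image g)
  have hXmono : Monotone X := PCaux.seq_mono hXrec hXdisj
  have hXfin : ∀ n, (X n).Finite := PCaux.seq_fin hD hXrec (by rw [hX0]; exact hX₀'.image g)
  have hXsubT : ∀ n, X n ⊆ X T := by
    intro n
    rcases le_total n T with hnT | hTn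
    · exact hXmono hnT
    · rw [hstab n hTn]
  -- definitions on the G' side
  set S : ℕ → Set V' := fun n => {y' | ∃ x ∈ X (M * n), (G'.dist y' (f x) : ℝ) ≤ K} with hS
  set Wh : ℕ → Set V' := fun m =>
    {y' | ∃ i ∈ Finset.Icc (M * (m - 1) + 1) (M * m), ∃ x ∈ W i,
      (G'.dist y' (f x) : ℝ) ≤ R} with hWh
  set W' : ℕ → Set V' := fun m => Wh m \ S (m - 1) with hW'
  set X' : ℕ → Set V' := fun n => Nat.rec (motive := fun _ => Set V') X₀'
    (fun n Xn => {v : V' | ∃ u ∈ Xn, v = u ∨ G'.Adj u v} \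
      (⋃ k ∈ Finset.Icc 1 (n + 1), W' k)) n with hX'
  have hX'0 : X' 0 = X₀' := by rw [hX']; rfl
  have hX'rec : ∀ n : ℕ, X' (n + 1) =
      {v : V' | ∃ u ∈ X' n, v = u ∨ G'.Adj u v} \
        (⋃ k ∈ Finset.Icc 1 (n + 1), W' k) := by
    intro n; rw [hX']
  have hSmono : ∀ {a b : ℕ}, a ≤ b → S a ⊆ S b := by
    intro a b hab y' hy'
    rw [hS] at hy' ⊢
    obtain ⟨x, hx, hxd⟩ := hy'
    exact ⟨x, hXmono (Nat.mul_le_mul_left M hab) hx, hxd⟩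
  -- MAIN CLAIM : X' n ⊆ S n
  have hXS : ∀ n, X' n ⊆ S n := by
    intro n
    induction n with
    | zero =>
      intro y' hy'
      rw [hX'0] at hy'
      rw [hS]
      refine ⟨g y', ?_, hg y'⟩
      rw [Nat.mul_zero, hX0]
      exact Set.mem_image_of_mem g hy'
    | succ n ih =>
      intro y' hy'
      rw [hX'rec n] at hy'
      obtain ⟨⟨u', hu', hadj⟩, hnot⟩ := hy'
      obtain ⟨x, hx, hxd⟩ := ih hu'
      -- distance estimates
      have hdu'y : (G'.dist u' y' : ℝ) ≤ 1 := by
        rcases hadj with rfl | hadj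
        · simp [SimpleGraph.dist_self]
        · rw [SimpleGraph.dist_eq_one_iff_adj.mpr hadj]; norm_num
      have hxd' : (G'.dist (f x) u' : ℝ) ≤ K := by rwa [SimpleGraph.dist_comm]
      have htri : (G'.dist (f x) (f (g y')) : ℝ) ≤ 2 * K + 1 := by
        have t1 : G'.dist (f x) (f (g y')) ≤ G'.dist (f x) u' + G'.dist u' (f (g y')) :=
          hG'.dist_triangle
        have t2 : G'.dist u' (f (g y')) ≤ G'.dist u' y' + G'.dist y' (f (g y')) :=
          hG'.dist_triangle
        have t3 := hg y'
        have c1 : (G'.dist (f x) (f (g y')) : ℝ) ≤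
            (G'.dist (f x) u' : ℝ) + ((G'.dist u' y' : ℝ) + (G'.dist y' (f (g y')) : ℝ)) := by
          exact_mod_cast t1.trans (Nat.add_le_add_left t2 _)
        linarith
      have hLM : G.dist x (g y') ≤ M := by
        have l1 := (hfb x (g y')).1
        have l2 : (G.dist x (g y') : ℝ) ≤ lam * (2 * K + 1 + ε) := by
          have l3 : lam⁻¹ * (G.dist x (g y') : ℝ) ≤ 2 * K + 1 + ε := by linarith
          have l4 := mul_le_mul_of_nonneg_left l3 (le_of_lt hlam0)
          rwa [← mul_assoc, mul_inv_cancel₀ (ne_of_gt hlam0), one_mul] at l4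
        have l5 : (G.dist x (g y') : ℝ) ≤ (M : ℝ) := by
          refine l2.trans ((Nat.le_ceil _).trans ?_)
          exact_mod_cast le_max_right 1 ⌈lam * (2 * K + 1 + ε)⌉₊
        exact_mod_cast l5
      obtain ⟨w, hwlen⟩ := hG.exists_walk_length_eq_dist x (g y')
      have hLM' : w.length ≤ M := by rw [hwlen]; exact hLM
      have hfz : ∀ t, t ≤ w.length → (G'.dist y' (f (w.getVert t)) : ℝ) ≤ R := by
        intro t ht
        have d1 : G.dist (g y') (w.getVert t) ≤ 2 * M := by
          have d2 : G.dist (g y') (w.getVert t) ≤ G.dist (g y') x + G.dist x (w.getVert t) :=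
            hG.dist_triangle
          have d3 : G.dist (g y') x ≤ M := by rwa [SimpleGraph.dist_comm]
          have d4 : G.dist x (w.getVert t) ≤ t := PCaux.dist_getVert_le hG w t
          omega
        have d5 := (hfb (g y') (w.getVert t)).2
        have d6 : (G'.dist (f (g y')) (f (w.getVert t)) : ℝ) ≤ lam * (2 * M) + ε := by
          have d7 : (G.dist (g y') (w.getVert t) : ℝ) ≤ (2 * M : ℝ) := by exact_mod_cast d1
          nlinarith [d5, mul_le_mul_of_nonneg_left d7 (le_of_lt hlam0)]
        have d8 : G'.dist y' (f (w.getVert t)) ≤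
            G'.dist y' (f (g y')) + G'.dist (f (g y')) (f (w.getVert t)) := hG'.dist_triangle
        have d9 : (G'.dist y' (f (w.getVert t)) : ℝ) ≤
            (G'.dist y' (f (g y')) : ℝ) + (G'.dist (f (g y')) (f (w.getVert t)) : ℝ) := by
          exact_mod_cast d8
        have := hg y'
        rw [hR]
        linarith
      by_cases hcase : ∃ t, 1 ≤ t ∧ t ≤ w.length ∧
          ∃ i, 1 ≤ i ∧ i ≤ M * (n + 1) ∧ w.getVert t ∈ W i
      · -- case B : the interpolating walk hits some W i
        obtain ⟨t, ht1, htL, i, hi1, hiM, hzW⟩ := hcase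
        obtain ⟨q, hq⟩ : ∃ q : ℕ, q = (i - 1) / M := ⟨_, rfl⟩
        obtain ⟨rr, hrr⟩ : ∃ rr : ℕ, rr = (i - 1) % M := ⟨_, rfl⟩
        have e1 : M * q + rr = i - 1 := by rw [hq, hrr]; exact Nat.div_add_mod _ _
        have e2 : rr < M := by rw [hrr]; exact Nat.mod_lt _ hMpos
        have e5 : M * (q + 1) = M * q + M := by rw [Nat.mul_succ]
        have e3 : M * q < M * (n + 1) := by omega
        have e4 : q < n + 1 := Nat.lt_of_mul_lt_mul_left e3
        have hyWh : y' ∈ Wh (q + 1) := by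
          rw [hWh]
          refine ⟨i, ?_, w.getVert t, hzW, hfz t htL⟩
          rw [Nat.add_sub_cancel, Finset.mem_Icc]
          omega
        have hmem1 : q + 1 ∈ Finset.Icc 1 (n + 1) := Finset.mem_Icc.mpr ⟨by omega, by omega⟩
        have hynW' : y' ∉ W' (q + 1) := by
          intro hc
          exact hnot (Set.mem_iUnion₂.mpr ⟨q + 1, hmem1, hc⟩)
        have hyS : y' ∈ S q := by
          by_contra hns
          apply hynW'
          rw [hW']
          exact ⟨hyWh, by rwa [Nat.add_sub_cancel]⟩
        exact hSmono (by omega) hyS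
      · -- case A : the interpolating walk is admissible
        push_neg at hcase
        have hzX : ∀ t, t ≤ w.length → w.getVert t ∈ X (M * n + t) := by
          intro t
          induction t with
          | zero =>
            intro _
            simpa using hx
          | succ t iht =>
            intro htL
            have hzt := iht (by omega)
            show w.getVert (t + 1) ∈ X (M * n + t + 1)
            rw [hXrec (M * n + t)]
            refine ⟨⟨w.getVert t, hzt, Or.inr (w.adj_getVert_succ (by omega))⟩, ?_⟩
            intro hmem
            obtain ⟨k, hk, hkW⟩ := Set.mem_iUnion₂.mp hmem
            obtain ⟨hk1, hk2⟩ := Finset.mem_Icc.mp hk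
            have hkM : k ≤ M * (n + 1) := by
              have e5 : M * (n + 1) = M * n + M := by rw [Nat.mul_succ]
              omega
            exact hcase (t + 1) (by omega) htL k hk1 hkM hkW
        have hx1 : g y' ∈ X (M * (n + 1)) := by
          have h1 := hzX w.length le_rfl
          rw [SimpleGraph.Walk.getVert_length] at h1
          have h2 : M * n + w.length ≤ M * (n + 1) := by
            have e5 : M * (n + 1) = M * n + M := by rw [Nat.mul_succ]
            omega
          exact hXmono h2 h1
        rw [hS]
        exact ⟨g y', hx1, hg y'⟩
  -- ambient finite set
  have hSsubA : ∀ n, S n ⊆ {y' | ∃ x ∈ X T, (G'.dist y' (f x) : ℝ) ≤ K} := by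
    intro n y' hy'
    rw [hS] at hy'
    obtain ⟨x, hx, hxd⟩ := hy'
    exact ⟨x, hXsubT _ hx, hxd⟩
  have hAfin : ({y' | ∃ x ∈ X T, (G'.dist y' (f x) : ℝ) ≤ K} : Set V').Finite := by
    have hsub : {y' | ∃ x ∈ X T, (G'.dist y' (f x) : ℝ) ≤ K} ⊆
        ⋃ x ∈ X T, {y' | G'.dist (f x) y' ≤ ⌈K⌉₊} := by
      rintro y' ⟨x, hx, hd⟩
      refine Set.mem_iUnion₂.mpr ⟨x, hx, ?_⟩
      simp only [Set.mem_setOf_eq]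
      rw [SimpleGraph.dist_comm]
      have : (G'.dist y' (f x) : ℝ) ≤ (⌈K⌉₊ : ℝ) := hd.trans (Nat.le_ceil K)
      exact_mod_cast this
    exact Set.Finite.subset
      (Set.Finite.biUnion (hXfin T) fun x _ => (PCaux.ball_aux hG' hD' (f x) ⌈K⌉₊).1) hsub
  -- disjointness on the G' side
  have hX'disj : ∀ n, Disjoint (X' n) (W' (n + 1)) := by
    intro n
    rw [Set.disjoint_left]
    intro a haX haW
    rw [hW'] at haW
    have h2 : a ∉ S (n + 1 - 1) := haW.2
    rw [Nat.add_sub_cancel] at h2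
    exact h2 (hXS n haX)
  have hX'mono : Monotone X' := PCaux.seq_mono hX'rec hX'disj
  obtain ⟨T', hT'pos, hT'⟩ := PCaux.stabilize hX'mono hAfin
    (fun n => (hXS n).trans (hSsubA n))
  -- size estimates for W'
  have hWh_card : ∀ m : ℕ, 1 ≤ m → (Wh m).Finite ∧ ((Wh m).ncard : ℝ) ≤ C' * (m : ℝ) ^ d := by
    intro m hm
    set F : ℕ → Finset V := fun i => if h : 1 ≤ i then (hWsz i h).1.toFinset else ∅ with hF
    set bal : V' → Finset V' := fun y => (PCaux.ball_aux hG' hD' y Rn).1.toFinset with hbal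
    set I : Finset ℕ := Finset.Icc (M * (m - 1) + 1) (M * m) with hI
    set U : Finset V' := I.biUnion (fun i => (F i).biUnion (fun x => bal (f x))) with hU
    have hsub : Wh m ⊆ ↑U := by
      intro y' hy'
      rw [hWh] at hy'
      obtain ⟨i, hiI, x, hxW, hyd⟩ := hy'
      have hi1 : 1 ≤ i := by
        have := (Finset.mem_Icc.mp hiI).1
        omega
      have hxF : x ∈ F i := by
        rw [hF]
        simp only [hi1, dif_pos]
        exact ((hWsz i hi1).1.mem_toFinset).mpr hxW
      have hyb : y' ∈ bal (f x) := by
        rw [hbal]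
        rw [Set.Finite.mem_toFinset]
        show G'.dist (f x) y' ≤ Rn
        rw [SimpleGraph.dist_comm]
        have : (G'.dist y' (f x) : ℝ) ≤ (Rn : ℝ) := hyd.trans (Nat.le_ceil R)
        exact_mod_cast this
      exact Finset.mem_coe.mpr
        (Finset.mem_biUnion.mpr ⟨i, hiI, Finset.mem_biUnion.mpr ⟨x, hxF, hyb⟩⟩)
    have hbalcard : ∀ y : V', (bal y).card ≤ B := by
      intro y
      rw [hbal, ← Set.ncard_eq_toFinset_card _ (PCaux.ball_aux hG' hD' y Rn).1]
      exact (PCaux.ball_aux hG' hD' y Rn).2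
    refine ⟨Set.Finite.subset U.finite_toSet hsub, ?_⟩
    have h1 : (Wh m).ncard ≤ U.card := by
      have := Set.ncard_le_ncard hsub U.finite_toSet
      rwa [Set.ncard_coe_finset] at this
    have h2 : U.card ≤ ∑ i ∈ I, (F i).card * B := by
      refine Finset.card_biUnion_le.trans (Finset.sum_le_sum fun i _ => ?_)
      refine Finset.card_biUnion_le.trans ?_
      calc ∑ x ∈ F i, (bal (f x)).card ≤ ∑ _x ∈ F i, B :=
            Finset.sum_le_sum fun x _ => hbalcard (f x)
        _ = (F i).card * B := by rw [Finset.sum_const, smul_eq_mul]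
    have h3 : (((∑ i ∈ I, (F i).card * B) : ℕ) : ℝ) ≤ ∑ i ∈ I, C * (M * m : ℝ) ^ d * (B : ℝ) := by
      push_cast
      refine Finset.sum_le_sum fun i hi => ?_
      have hi1 : 1 ≤ i := by
        have := (Finset.mem_Icc.mp (hI ▸ hi)).1
        omega
      have hiMm : i ≤ M * m := (Finset.mem_Icc.mp (hI ▸ hi)).2
      have hFi : ((F i).card : ℝ) ≤ C * (i : ℝ) ^ d := by
        rw [hF]
        simp only [hi1, dif_pos]
        rw [← Set.ncard_eq_toFinset_card _ (hWsz i hi1).1]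
        exact (hWsz i hi1).2
      have hpow : ((i : ℝ)) ^ d ≤ (M * m : ℝ) ^ d := by
        refine pow_le_pow_left₀ (by positivity) ?_ d
        exact_mod_cast hiMm
      have hBnn : (0 : ℝ) ≤ (B : ℝ) := by positivity
      calc ((F i).card : ℝ) * (B : ℝ) ≤ (C * (i : ℝ) ^ d) * (B : ℝ) :=
            mul_le_mul_of_nonneg_right hFi hBnn
        _ ≤ (C * (M * m : ℝ) ^ d) * (B : ℝ) := by
            refine mul_le_mul_of_nonneg_right ?_ hBnn
            exact mul_le_mul_of_nonneg_left hpow (le_of_lt hC)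
    have hIcard : I.card ≤ M := by
      rw [hI, Nat.card_Icc]
      have e5 : M * m = M * (m - 1) + M := by
        obtain ⟨m', rfl⟩ : ∃ m', m = m' + 1 := ⟨m - 1, by omega⟩
        rw [Nat.add_sub_cancel, Nat.mul_succ]
      omega
    have h4 : (∑ i ∈ I, C * (M * m : ℝ) ^ d * (B : ℝ)) ≤ (M : ℝ) * (C * (M * m : ℝ) ^ d * (B : ℝ)) := by
      rw [Finset.sum_const, nsmul_eq_mul]
      have hnn : (0 : ℝ) ≤ C * (M * m : ℝ) ^ d * (B : ℝ) := by positivity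
      refine mul_le_mul_of_nonneg_right ?_ hnn
      exact_mod_cast hIcard
    have hfinal : (M : ℝ) * (C * (M * m : ℝ) ^ d * (B : ℝ)) = C' * (m : ℝ) ^ d := by
      rw [hC']
      push_cast
      rw [mul_pow]
      ring
    have hcast1 : ((Wh m).ncard : ℝ) ≤ (((∑ i ∈ I, (F i).card * B) : ℕ) : ℝ) := by
      exact_mod_cast h1.trans h2
    linarith [hcast1, h3, h4, le_of_eq hfinal]
  -- assemble
  refine ⟨W', X', hX'0, ?_, ?_, hX'disj, T', hT'pos, fun n hn => hT' n hn⟩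
  · intro n hn
    obtain ⟨hWhfin, hWhcard⟩ := hWh_card n hn
    have hsub : W' n ⊆ Wh n := by rw [hW']; exact Set.diff_subset
    refine ⟨hWhfin.subset hsub, ?_⟩
    have := Set.ncard_le_ncard hsub hWhfin
    calc ((W' n).ncard : ℝ) ≤ ((Wh n).ncard : ℝ) := by exact_mod_cast this
      _ ≤ C' * (n : ℝ) ^ d := hWhcard
  · intro n
    exact hX'rec n
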